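/- Let S ⊆ ℝ₊ⁿ be compact and convex with 0 ∈ S, and suppose φ_S(ξ) = φ_S(ξ⁺) for all ξ ∈ ℝⁿ. Then with σ_S = φ_S(1,…,1), for all z, w ∈ (ℂ*)ⁿ with z-w ∈ (ℂ*)ⁿ we have H_S(z-w) ≤ σ_S·max_j|w_j| + H_S(z). -/

import Mathlib

/-- Support function of `S`. -/
noncomputable def suppFn {n : ℕ} (S : Set (Fin n → ℝ)) (ξ : Fin n → ℝ) : ℝ :=
  sSup ((fun s => ∑ j, s j * ξ j) '' S)

/-- Logarithmic supporting function of `S` on `(ℂ*)ⁿ`. -/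
noncomputable def HS {n : ℕ} (S : Set (Fin n → ℝ)) (z : Fin n → ℂ) : ℝ :=
  suppFn S (fun j => Real.log ‖z j‖)

lemma logplus_lip (x y : ℝ) (hx : 0 < x) (hy : 0 < y) :
    max (Real.log x) 0 ≤ max (Real.log y) 0 + |x - y| := by
  rcases le_or_gt x 1 with hx1 | hx1
  · have : Real.log x ≤ 0 := Real.log_nonpos (le_of_lt hx) hx1
    have h1 : max (Real.log x) 0 = 0 := max_eq_right this
    rw [h1]
    positivity
  · have hlx : Real.log x ≤ x - 1 := Real.log_le_sub_one_of_pos hx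
    rcases le_or_gt y 1 with hy1 | hy1
    · have habs : x - y ≤ |x - y| := le_abs_self _
      have : Real.log x ≤ max (Real.log y) 0 + |x - y| := by
        have h0 : (0:ℝ) ≤ max (Real.log y) 0 := le_max_right _ _
        linarith
      exact max_le this (by positivity)
    · rcases le_or_gt x y with hxy | hxy
      · have : Real.log x ≤ Real.log y := Real.log_le_log hx hxy
        have h0 : (0:ℝ) ≤ |x - y| := abs_nonneg _
        have hly : Real.log y ≤ max (Real.log y) 0 := le_max_left _ _
        exact max_le (by linarith) (by positivity)
      · have hdiv : Real.log (x / y) ≤ x / y - 1 :=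
          Real.log_le_sub_one_of_pos (div_pos hx hy)
        rw [Real.log_div (ne_of_gt hx) (ne_of_gt hy)] at hdiv
        have habs : |x - y| = x - y := abs_of_pos (by linarith)
        have hkey : x / y - 1 ≤ x - y := by
          rw [div_sub_one (ne_of_gt hy), div_le_iff₀ hy]
          nlinarith
        have hly : Real.log y ≤ max (Real.log y) 0 := le_max_left _ _
        refine max_le ?_ (by positivity)
        rw [habs]; linarith

lemma suppFn_bdd {n : ℕ} {S : Set (Fin n → ℝ)} (hc : IsCompact S) (ξ : Fin n → ℝ) :
    BddAbove ((fun s => ∑ j, s j * ξ j) '' S) := by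
  have hcont : Continuous (fun s : Fin n → ℝ => ∑ j, s j * ξ j) := by
    apply continuous_finset_sum
    intro j _
    exact (continuous_apply j).mul continuous_const
  exact (hc.image hcont).bddAbove

/-- If `φ_S(ξ) = φ_S(ξ⁺)` then `H_S(z-w) ≤ σ_S·max_j|w_j| + H_S(z)`. -/
theorem stmt_10 {n : ℕ} [NeZero n] (S : Set (Fin n → ℝ)) (hc : IsCompact S)
    (hconv : Convex ℝ S) (h0 : (0 : Fin n → ℝ) ∈ S) (hpos : ∀ s ∈ S, ∀ i, 0 ≤ s i)
    (hplus : ∀ ξ : Fin n → ℝ, suppFn S ξ = suppFn S (fun j => max (ξ j) 0))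
    (z w : Fin n → ℂ) (hz : ∀ j, z j ≠ 0) (hzw : ∀ j, z j - w j ≠ 0) :
    HS S (fun j => z j - w j) ≤
      suppFn S (fun _ => 1) *
        (Finset.univ.sup' Finset.univ_nonempty fun j => ‖w j‖) + HS S z := by
  set ξ := fun j => Real.log ‖z j - w j‖ with hξ
  set η := fun j => Real.log ‖z j‖ with hη
  set M := Finset.univ.sup' Finset.univ_nonempty fun j => ‖w j‖ with hMdef
  set σ := suppFn S (fun _ => 1) with hσdef
  have j0 : Fin n := ⟨0, Nat.pos_of_ne_zero (NeZero.ne n)⟩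
  have hM : 0 ≤ M := le_trans (norm_nonneg (w j0))
    (Finset.le_sup' (fun j => ‖w j‖) (Finset.mem_univ j0))
  have key : ∀ j, max (ξ j) 0 ≤ max (η j) 0 + M := by
    intro j
    have h1 : max (ξ j) 0 ≤ max (η j) 0 + |‖z j - w j‖ - ‖z j‖| :=
      logplus_lip _ _ (norm_pos_iff.mpr (hzw j)) (norm_pos_iff.mpr (hz j))
    have h2 : |‖z j - w j‖ - ‖z j‖| ≤ ‖w j‖ := by
      have := abs_norm_sub_norm_le (z j - w j) (z j)
      simpa using this
    have h3 : ‖w j‖ ≤ M := Finset.le_sup' (fun j => ‖w j‖) (Finset.mem_univ j)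
    linarith
  have hσ0 : 0 ≤ σ := by
    have : (0:ℝ) ∈ (fun s => ∑ j, s j * (1:ℝ)) '' S := by
      refine ⟨0, h0, by simp⟩
    exact le_csSup (suppFn_bdd hc _) this
  show suppFn S ξ ≤ σ * M + suppFn S η
  rw [hplus ξ, hplus η]
  apply csSup_le (Set.Nonempty.image _ ⟨0, h0⟩)
  rintro _ ⟨s, hs, rfl⟩
  have h1 : ∑ j, s j * max (ξ j) 0 ≤ ∑ j, s j * (max (η j) 0 + M) :=
    Finset.sum_le_sum fun j _ => mul_le_mul_of_nonneg_left (key j) (hpos s hs j)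
  have h2 : ∑ j, s j * (max (η j) 0 + M) = ∑ j, s j * max (η j) 0 + (∑ j, s j * 1) * M := by
    rw [Finset.sum_mul]
    rw [← Finset.sum_add_distrib]
    congr 1; ext j; ring
  have h3 : ∑ j, s j * max (η j) 0 ≤ suppFn S (fun j => max (η j) 0) :=
    le_csSup (suppFn_bdd hc _) ⟨s, hs, rfl⟩
  have h4 : ∑ j, s j * 1 ≤ σ := le_csSup (suppFn_bdd hc _) ⟨s, hs, rfl⟩
  have h5 : (∑ j, s j * 1) * M ≤ σ * M := mul_le_mul_of_nonneg_right h4 hM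
  linarith
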